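/- arXiv:2405.06973 — 5 statements merged into one kernel-verified Lean document; each statement's English description precedes it below -/
import Mathlib

section
/- PInc entailment under team semantics satisfies the Or rule: if α ⊨ γ and β ⊨ γ for PInc formulas, then α ∨ β ⊨ γ. -/
inductive PIncForm (V : Type) : Type
  | pos : V → PIncForm V
  | neg : V → PIncForm V
  | bot : PIncForm V
  | top : PIncForm V
  | inc : List V → List V → PIncForm V
  | conj : PIncForm V → PIncForm V → PIncForm V
  | disj : PIncForm V → PIncForm V → PIncForm V

abbrev Team (V : Type) := Set (V → Bool)

def PIncSat {V : Type} : PIncForm V → Team V → Prop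
  | .pos p, X => ∀ v ∈ X, v p = true
  | .neg p, X => ∀ v ∈ X, v p = false
  | .bot, X => X = ∅
  | .top, _ => True
  | .inc as bs, X => ∀ v ∈ X, ∃ w ∈ X, as.map v = bs.map w
  | .conj a b, X => PIncSat a X ∧ PIncSat b X
  | .disj a b, X => ∃ Y Z, X = Y ∪ Z ∧ PIncSat a Y ∧ PIncSat b Z

lemma pinc_union {V : Type} (φ : PIncForm V) :
    ∀ Y Z : Team V, PIncSat φ Y → PIncSat φ Z → PIncSat φ (Y ∪ Z) := by
  induction φ with
  | pos p => intro Y Z hY hZ v hv; rcases hv with h | h; exacts [hY v h, hZ v h]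
  | neg p => intro Y Z hY hZ v hv; rcases hv with h | h; exacts [hY v h, hZ v h]
  | bot => intro Y Z hY hZ; simp only [PIncSat] at *; rw [hY, hZ, Set.union_empty]
  | top => intro Y Z _ _; trivial
  | inc as bs =>
    intro Y Z hY hZ v hv
    rcases hv with h | h
    · obtain ⟨w, hw, he⟩ := hY v h; exact ⟨w, Or.inl hw, he⟩
    · obtain ⟨w, hw, he⟩ := hZ v h; exact ⟨w, Or.inr hw, he⟩
  | conj a b iha ihb =>
    intro Y Z hY hZ
    exact ⟨iha Y Z hY.1 hZ.1, ihb Y Z hY.2 hZ.2⟩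
  | disj a b iha ihb =>
    intro Y Z hY hZ
    obtain ⟨Y1, Y2, hYe, ha1, hb1⟩ := hY
    obtain ⟨Z1, Z2, hZe, ha2, hb2⟩ := hZ
    exact ⟨Y1 ∪ Z1, Y2 ∪ Z2, by rw [hYe, hZe]; ac_rfl,
      iha Y1 Z1 ha1 ha2, ihb Y2 Z2 hb1 hb2⟩

/-- PInc team entailment satisfies the Or rule. -/
theorem pinc_or_rule {V : Type} (α β γ : PIncForm V)
    (hα : ∀ X : Team V, PIncSat α X → PIncSat γ X)
    (hβ : ∀ X : Team V, PIncSat β X → PIncSat γ X) :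
    ∀ X : Team V, PIncSat (PIncForm.disj α β) X → PIncSat γ X := by
  rintro X ⟨Y, Z, rfl, hY, hZ⟩
  exact pinc_union γ Y Z (hα Y hY) (hβ Z hZ)
end

section
/- For any preferential model W, the induced entailment ⊢_W satisfies Cut: if α∧β ⊢_W γ and α ⊢_W β, then α ⊢_W γ. -/
/-- A preferential model for a logic with interpretations `Ω`, formulas `Form`,
and satisfaction relation `Sat`. -/
structure PrefModel (Ω Form : Type) (Sat : Ω → Form → Prop) where
  S : Type
  lab : S → Ω
  lt : S → S → Prop
  lt_irrefl : ∀ s, ¬ lt s s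
  lt_trans : ∀ a b c, lt a b → lt b c → lt a c
  smooth : ∀ (φ : Form) (s : S), Sat (lab s) φ →
    (∀ s', Sat (lab s') φ → ¬ lt s' s) ∨
      ∃ s', Sat (lab s') φ ∧ lt s' s ∧ ∀ s'', Sat (lab s'') φ → ¬ lt s'' s'

/-- `s` is a `≺`-minimal state among those whose label satisfies `φ`. -/
def PrefModel.minimal {Ω Form : Type} {Sat : Ω → Form → Prop}
    (W : PrefModel Ω Form Sat) (φ : Form) (s : W.S) : Prop :=
  Sat (W.lab s) φ ∧ ∀ s', Sat (W.lab s') φ → ¬ W.lt s' s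

/-- The preferential entailment relation induced by `W`. -/
def PrefModel.ent {Ω Form : Type} {Sat : Ω → Form → Prop}
    (W : PrefModel Ω Form Sat) (α β : Form) : Prop :=
  ∀ s, W.minimal α s → Sat (W.lab s) β

/-- Cut for preferential entailment, for any conjunction connective whose
satisfaction is the conjunction of the satisfactions. -/
theorem pref_cut {Ω Form : Type} {Sat : Ω → Form → Prop}
    (W : PrefModel Ω Form Sat) (conj : Form → Form → Form)
    (hconj : ∀ (ω : Ω) (a b : Form), Sat ω (conj a b) ↔ Sat ω a ∧ Sat ω b)
    (α β γ : Form)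
    (h1 : W.ent (conj α β) γ) (h2 : W.ent α β) :
    W.ent α γ := by
  intro s hs
  have hβ := h2 s hs
  apply h1 s
  refine ⟨(hconj _ _ _).mpr ⟨hs.1, hβ⟩, ?_⟩
  intro s' hs' hlt
  exact hs.2 s' ((hconj _ _ _).mp hs').1 hlt
end

section
/- For any preferential model W, the induced entailment ⊢_W satisfies Cautious Monotony: if α ⊢_W β and α ⊢_W γ, then α∧β ⊢_W γ. -/
/-- Cautious Monotony for preferential entailment, for any conjunction
connective whose satisfaction is the conjunction of the satisfactions. -/
theorem pref_cautious_monotony {Ω Form : Type} {Sat : Ω → Form → Prop}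
    (W : PrefModel Ω Form Sat) (conj : Form → Form → Form)
    (hconj : ∀ (ω : Ω) (a b : Form), Sat ω (conj a b) ↔ Sat ω a ∧ Sat ω b)
    (α β γ : Form)
    (h1 : W.ent α β) (h2 : W.ent α γ) :
    W.ent (conj α β) γ := by
  intro s hs
  obtain ⟨hsab, hmin⟩ := hs
  have hsa : Sat (W.lab s) α := ((hconj _ _ _).1 hsab).1
  have hminα : W.minimal α s := by
    refine ⟨hsa, ?_⟩
    rcases W.smooth α s hsa with h | ⟨s', hs'a, hlt, hmin'⟩
    · exact h
    · exfalso
      have hs'b : Sat (W.lab s') β := h1 s' ⟨hs'a, hmin'⟩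
      exact hmin s' ((hconj _ _ _).2 ⟨hs'a, hs'b⟩) hlt
  exact h2 s hminα
end

section
/- For any team X over a finite variable set N = {p₁,…,pₙ}, the formula Θ_X := ⋁_{v∈X} (p₁^{v(p₁)} ∧ … ∧ pₙ^{v(pₙ)}) (where p^1 = p and p^0 = ¬p, and the empty disjunction is ⊥) defines exactly the downward closure of X: for every team Y over N, Y ⊨ Θ_X if and only if Y ⊆ X. -/
inductive PLForm (V : Type) : Type
  | pos : V → PLForm V
  | neg : V → PLForm V
  | bot : PLForm V
  | top : PLForm V
  | conj : PLForm V → PLForm V → PLForm V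
  | disj : PLForm V → PLForm V → PLForm V

def PLSat {V : Type} : PLForm V → Team V → Prop
  | .pos p, X => ∀ v ∈ X, v p = true
  | .neg p, X => ∀ v ∈ X, v p = false
  | .bot, X => X = ∅
  | .top, _ => True
  | .conj a b, X => PLSat a X ∧ PLSat b X
  | .disj a b, X => ∃ Y Z, X = Y ∪ Z ∧ PLSat a Y ∧ PLSat b Z

/-- The conjunction of literals `p₁^{v(p₁)} ∧ … ∧ pₙ^{v(pₙ)}` describing the
valuation `v`. -/
def litConj {n : ℕ} (v : Fin n → Bool) : PLForm (Fin n) :=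
  (List.finRange n).foldr
    (fun i acc => PLForm.conj (if v i then PLForm.pos i else PLForm.neg i) acc)
    PLForm.top

/-- `Θ_X`: the disjunction, over `v ∈ X`, of the literal descriptions of `v`
(the empty disjunction being `⊥`). -/
noncomputable def Theta {n : ℕ} (X : Finset (Fin n → Bool)) : PLForm (Fin n) :=
  (X.toList.map litConj).foldr PLForm.disj PLForm.bot

lemma litConj_aux {n : ℕ} (v : Fin n → Bool) (l : List (Fin n)) (Y : Team (Fin n)) :
    PLSat (l.foldr
      (fun i acc => PLForm.conj (if v i then PLForm.pos i else PLForm.neg i) acc)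
      PLForm.top) Y ↔ ∀ i ∈ l, ∀ w ∈ Y, w i = v i := by
  induction l with
  | nil => simp [PLSat]
  | cons a t ih =>
    simp only [List.foldr_cons, PLSat, ih, List.mem_cons]
    constructor
    · rintro ⟨h1, h2⟩ i hi w hw
      rcases hi with rfl | hi
      · by_cases hv : v i <;> simp [hv, PLSat] at h1 <;> simp [h1 w hw, hv]
      · exact h2 i hi w hw
    · intro h
      refine ⟨?_, fun i hi w hw => h i (Or.inr hi) w hw⟩
      by_cases hv : v a <;> simp [hv, PLSat] <;> intro w hw <;>
        simpa [hv] using h a (Or.inl rfl) w hw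

lemma litConj_sat {n : ℕ} (v : Fin n → Bool) (Y : Team (Fin n)) :
    PLSat (litConj v) Y ↔ ∀ w ∈ Y, w = v := by
  rw [litConj, litConj_aux]
  constructor
  · intro h w hw; funext i; exact h i (List.mem_finRange i) w hw
  · intro h i _ w hw; rw [h w hw]

lemma theta_aux {n : ℕ} (l : List (Fin n → Bool)) (Y : Team (Fin n)) :
    PLSat ((l.map litConj).foldr PLForm.disj PLForm.bot) Y ↔ Y ⊆ {v | v ∈ l} := by
  induction l generalizing Y with
  | nil => simp [PLSat, Set.subset_empty_iff, Set.eq_empty_iff_forall_notMem]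
  | cons a t ih =>
    simp only [List.map_cons, List.foldr_cons, PLSat]
    constructor
    · rintro ⟨Z, W, rfl, hZ, hW⟩ w hw
      rcases hw with hw | hw
      · exact (litConj_sat a Z).1 hZ w hw ▸ (List.mem_cons_self : a ∈ a :: t)
      · exact List.mem_cons_of_mem a ((ih W).1 hW hw)
    · intro h
      refine ⟨Y ∩ {a}, Y ∩ {v | v ∈ t}, ?_, ?_, ?_⟩
      · ext w; constructor
        · intro hw
          rcases (by simpa using h hw : w = a ∨ w ∈ t) with rfl | hw'
          · exact Or.inl ⟨hw, rfl⟩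
          · exact Or.inr ⟨hw, hw'⟩
        · rintro (⟨hw, _⟩ | ⟨hw, _⟩) <;> exact hw
      · exact (litConj_sat a _).2 fun w hw => hw.2
      · exact (ih _).2 fun w hw => hw.2

/-- `Θ_X` defines exactly the downward closure of the team `X`. -/
theorem theta_defines_subteams {n : ℕ} (X : Finset (Fin n → Bool))
    (Y : Team (Fin n)) : PLSat (Theta X) Y ↔ Y ⊆ (X : Set (Fin n → Bool)) := by
  rw [Theta, theta_aux]
  simp [Set.subset_def]
end

section
/- For the preferential model W_sub over PDL whose states are all nonempty teams ordered by Y ≺ X iff Y ⊊ X, the induced entailment satisfies: A ⊢_{W_sub} B if and only if A^f ⊨^c B^f, where φ^f is the flattening of φ (replace every dependence atom by ⊤) and ⊨^c is classical propositional entailment over single valuations. -/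
inductive PDLForm (V : Type) : Type
  | pos : V → PDLForm V
  | neg : V → PDLForm V
  | bot : PDLForm V
  | top : PDLForm V
  | dep : List V → V → PDLForm V
  | conj : PDLForm V → PDLForm V → PDLForm V
  | disj : PDLForm V → PDLForm V → PDLForm V

def PDLSat {V : Type} : PDLForm V → Team V → Prop
  | .pos p, X => ∀ v ∈ X, v p = true
  | .neg p, X => ∀ v ∈ X, v p = false
  | .bot, X => X = ∅
  | .top, _ => True
  | .dep as b, X => ∀ v ∈ X, ∀ w ∈ X, as.map v = as.map w → v b = w b
  | .conj a b, X => PDLSat a X ∧ PDLSat b X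
  | .disj a b, X => ∃ Y Z, X = Y ∪ Z ∧ PDLSat a Y ∧ PDLSat b Z

/-- Classical (single-valuation) satisfaction for PL formulas. -/
def PLSatC {V : Type} : PLForm V → (V → Bool) → Prop
  | .pos p, v => v p = true
  | .neg p, v => v p = false
  | .bot, _ => False
  | .top, _ => True
  | .conj a b, v => PLSatC a v ∧ PLSatC b v
  | .disj a b, v => PLSatC a v ∨ PLSatC b v

/-- The flattening of a PDL formula: replace every dependence atom by `⊤`. -/
def flatten {V : Type} : PDLForm V → PLForm V
  | .pos p => .pos p
  | .neg p => .neg p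
  | .bot => .bot
  | .top => .top
  | .dep _ _ => .top
  | .conj a b => .conj (flatten a) (flatten b)
  | .disj a b => .disj (flatten a) (flatten b)

/-- Entailment in the preferential model `W_sub`: states are the nonempty
teams, labelled by themselves, with `Y ≺ X` iff `Y ⊊ X`; `A ⊢ B` iff every
`⊊`-minimal nonempty team satisfying `A` satisfies `B`. -/
def entWsub {V : Type} (A B : PDLForm V) : Prop :=
  ∀ X : Team V, X.Nonempty → PDLSat A X →
    (∀ Y : Team V, Y.Nonempty → PDLSat A Y → ¬ Y ⊂ X) → PDLSat B X

lemma PDLSat_empty {V : Type} (φ : PDLForm V) : PDLSat φ (∅ : Team V) := by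
  induction φ with
  | pos p => intro v hv; exact absurd hv (by simp)
  | neg p => intro v hv; exact absurd hv (by simp)
  | bot => rfl
  | top => trivial
  | dep as b => intro v hv; exact absurd hv (by simp)
  | conj a b ha hb => exact ⟨ha, hb⟩
  | disj a b ha hb => exact ⟨∅, ∅, by simp, ha, hb⟩

lemma PDLSat_mono {V : Type} (φ : PDLForm V) : ∀ X Y : Team V, Y ⊆ X → PDLSat φ X → PDLSat φ Y := by
  induction φ with
  | pos p => intro X Y hYX h v hv; exact h v (hYX hv)
  | neg p => intro X Y hYX h v hv; exact h v (hYX hv)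
  | bot => intro X Y hYX h; subst h; exact Set.subset_eq_empty hYX rfl
  | top => intros; trivial
  | dep as b => intro X Y hYX h v hv w hw; exact h v (hYX hv) w (hYX hw)
  | conj a b ha hb => intro X Y hYX h; exact ⟨ha X Y hYX h.1, hb X Y hYX h.2⟩
  | disj a b ha hb =>
    intro X Y hYX h
    obtain ⟨P, Q, hX, hp, hq⟩ := h
    refine ⟨Y ∩ P, Y ∩ Q, ?_, ha P _ Set.inter_subset_right hp, hb Q _ Set.inter_subset_right hq⟩
    rw [← Set.inter_union_distrib_left, ← hX]
    exact (Set.inter_eq_left.mpr hYX).symm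

lemma PDLSat_singleton {V : Type} (φ : PDLForm V) (v : V → Bool) :
    PDLSat φ ({v} : Team V) ↔ PLSatC (flatten φ) v := by
  induction φ with
  | pos p => simp [PDLSat, flatten, PLSatC]
  | neg p => simp [PDLSat, flatten, PLSatC]
  | bot => simp [PDLSat, flatten, PLSatC]
  | top => simp [PDLSat, flatten, PLSatC]
  | dep as b => simp only [PDLSat, flatten, PLSatC, Set.mem_singleton_iff]; constructor
                · intro; trivial
                · rintro _ x rfl y rfl _; rfl
  | conj a b ha hb => simp [PDLSat, flatten, PLSatC, ha, hb]
  | disj a b ha hb =>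
    constructor
    · rintro ⟨Y, Z, hX, hy, hz⟩
      have hv : v ∈ Y ∪ Z := hX ▸ rfl
      cases hv with
      | inl h =>
        left
        have : Y = {v} := Set.eq_singleton_iff_unique_mem.mpr
          ⟨h, fun x hx => by have : x ∈ Y ∪ Z := Or.inl hx; rw [← hX] at this; exact this⟩
        exact ha.mp (this ▸ hy)
      | inr h =>
        right
        have : Z = {v} := Set.eq_singleton_iff_unique_mem.mpr
          ⟨h, fun x hx => by have : x ∈ Y ∪ Z := Or.inr hx; rw [← hX] at this; exact this⟩
        exact hb.mp (this ▸ hz)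
    · rintro (h | h)
      · exact ⟨{v}, ∅, by simp, ha.mpr h, PDLSat_empty b⟩
      · exact ⟨∅, {v}, by simp, PDLSat_empty a, hb.mpr h⟩

/-- `A ⊢_{W_sub} B` iff the flattenings satisfy classical entailment. -/
theorem entWsub_iff_classical_flattening {V : Type} (A B : PDLForm V) :
    entWsub A B ↔ ∀ v : V → Bool, PLSatC (flatten A) v → PLSatC (flatten B) v := by
  constructor
  · intro h v hA
    have := h {v} ⟨v, rfl⟩ ((PDLSat_singleton A v).mpr hA)
      (fun Y hY _ hYX => by
        obtain ⟨w, hw⟩ := hY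
        have := hYX.1 hw
        rw [Set.mem_singleton_iff] at this; subst this
        exact hYX.2 (Set.singleton_subset_iff.mpr hw))
    exact (PDLSat_singleton B v).mp this
  · intro h X hX hA hmin
    obtain ⟨v, hv⟩ := hX
    have hsub : ({v} : Team V) ⊆ X := Set.singleton_subset_iff.mpr hv
    have hAs : PDLSat A {v} := PDLSat_mono A X {v} hsub hA
    have hXeq : X = {v} := by
      by_contra hne
      exact hmin {v} ⟨v, rfl⟩ hAs ⟨hsub, fun hXs => hne (Set.Subset.antisymm hXs hsub)⟩
    rw [hXeq]
    exact (PDLSat_singleton B v).mpr (h v ((PDLSat_singleton A v).mp hAs))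
end
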